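/- The following explicit loop in SO(3) is null-homotopic (path-homotopic, relative to its endpoints, to the constant loop at the identity matrix, within the subspace SO(3) of 3×3 real matrices): the concatenation of the four paths of orthonormal 2-frames, each completed to an SO(3)-valued path by the rule (v₁, v₂) ↦ [v₁×v₂ | v₁ | v₂], given for t ∈ [0,1] by: (1) v₁(t) = cos(πt)·e₁ + sin(πt)·ē, v₂(t) = e₂, running from [e₁, e₂] to [−e₁, e₂]; (2) v₁(t) = −e₁, v₂(t) = cos(πt)·e₂ − sin(πt)·ē, running from [−e₁, e₂] to [−e₁, −e₂]; (3) v₁(t) = −cos(πt)·e₁ + sin(πt)·ē, v₂(t) = −e₂, running from [−e₁, −e₂] to [e₁, −e₂]; (4) v₁(t) = e₁, v₂(t) = −cos(πt)·e₂ + sin(πt)·ē, running from [e₁, −e₂] back to [e₁, e₂]. (This is the verification that the loop (⁺₊⁺₋)·(⁺₋⁻₋)·(⁻₋⁻₊)·(⁻₊⁺₊) of the coherent system of frame paths is null-homotopic in SO(3).) -/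

import Mathlib

noncomputable section

open Real

set_option linter.unnecessarySeqFocus false

/-- `SO(3)`: the special orthogonal group of 3×3 real matrices, topologized as a subspace
of the 3×3 matrices. -/
abbrev SO3 := {M : Matrix (Fin 3) (Fin 3) ℝ // M.transpose * M = 1 ∧ M.det = 1}

/-- The standard basis vector `ē = (1,0,0)` of `ℝ³`. -/
def eBar : Fin 3 → ℝ := ![1, 0, 0]

/-- The standard basis vector `e₁ = (0,1,0)` of `ℝ³`. -/
def eOne : Fin 3 → ℝ := ![0, 1, 0]

/-- The standard basis vector `e₂ = (0,0,1)` of `ℝ³`. -/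
def eTwo : Fin 3 → ℝ := ![0, 0, 1]

/-- The matrix `[v₁×v₂ | v₁ | v₂]` whose columns are `v₁×v₂`, `v₁`, `v₂`; for an
orthonormal pair `(v₁, v₂)` it lies in `SO(3)`. -/
def frameMatrix (v₁ v₂ : Fin 3 → ℝ) : Matrix (Fin 3) (Fin 3) ℝ :=
  Matrix.of fun i j => ![crossProduct v₁ v₂, v₁, v₂] j i

/-- The identity element of `SO(3)`; it is the matrix of the frame `[e₁, e₂]`. -/
def so3One : SO3 := ⟨1, by simp, by simp⟩

/-- The frame `[−e₁, e₂]` as an element of `SO(3)`. -/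
def so3MP : SO3 := ⟨frameMatrix (-eOne) eTwo, by
  refine ⟨?_, ?_⟩
  · ext i j
    fin_cases i <;> fin_cases j <;>
      simp [frameMatrix, cross_apply, eOne, eTwo, Matrix.mul_apply, Fin.sum_univ_three,
        Matrix.one_apply, Matrix.transpose_apply, Matrix.vecHead, Matrix.vecTail]
  · simp [frameMatrix, cross_apply, eOne, eTwo, Matrix.det_fin_three, Matrix.vecHead,
      Matrix.vecTail]⟩

/-- The frame `[−e₁, −e₂]` as an element of `SO(3)`. -/
def so3MM : SO3 := ⟨frameMatrix (-eOne) (-eTwo), by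
  refine ⟨?_, ?_⟩
  · ext i j
    fin_cases i <;> fin_cases j <;>
      simp [frameMatrix, cross_apply, eOne, eTwo, Matrix.mul_apply, Fin.sum_univ_three,
        Matrix.one_apply, Matrix.transpose_apply, Matrix.vecHead, Matrix.vecTail]
  · simp [frameMatrix, cross_apply, eOne, eTwo, Matrix.det_fin_three, Matrix.vecHead,
      Matrix.vecTail]⟩

/-- The frame `[e₁, −e₂]` as an element of `SO(3)`. -/
def so3PM : SO3 := ⟨frameMatrix eOne (-eTwo), by
  refine ⟨?_, ?_⟩
  · ext i j
    fin_cases i <;> fin_cases j <;>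
      simp [frameMatrix, cross_apply, eOne, eTwo, Matrix.mul_apply, Fin.sum_univ_three,
        Matrix.one_apply, Matrix.transpose_apply, Matrix.vecHead, Matrix.vecTail]
  · simp [frameMatrix, cross_apply, eOne, eTwo, Matrix.det_fin_three, Matrix.vecHead,
      Matrix.vecTail]⟩

/-- The frame path `(⁺₊⁺₋)`: `v₁(t) = cos(πt)·e₁ + sin(πt)·ē`, `v₂(t) = e₂`, running from
`[e₁, e₂]` (the identity) to `[−e₁, e₂]`. -/
def pathA : Path so3One so3MP where
  toFun t := ⟨frameMatrix (fun i => cos (π * t) * eOne i + sin (π * t) * eBar i) eTwo, by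
    have h := sin_sq_add_cos_sq (π * (t : ℝ))
    refine ⟨?_, ?_⟩
    · ext i j
      fin_cases i <;> fin_cases j <;>
        (simp [frameMatrix, cross_apply, eOne, eTwo, eBar, Matrix.mul_apply,
          Fin.sum_univ_three, Matrix.one_apply, Matrix.transpose_apply, Matrix.vecHead,
          Matrix.vecTail] <;> nlinarith [h])
    · simp [frameMatrix, cross_apply, eOne, eTwo, eBar, Matrix.det_fin_three,
        Matrix.vecHead, Matrix.vecTail] <;> nlinarith [h]⟩
  continuous_toFun := by
    apply Continuous.subtype_mk
    apply continuous_matrix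
    intro i j
    fin_cases i <;> fin_cases j <;>
      (simp [frameMatrix, cross_apply, eOne, eTwo, eBar, Matrix.vecHead, Matrix.vecTail] <;>
        fun_prop)
  source' := by
    apply Subtype.ext
    ext i j
    fin_cases i <;> fin_cases j <;>
      simp [frameMatrix, cross_apply, eOne, eTwo, eBar, so3One, Matrix.one_apply,
        Matrix.vecHead, Matrix.vecTail]
  target' := by
    apply Subtype.ext
    ext i j
    fin_cases i <;> fin_cases j <;>
      simp [frameMatrix, cross_apply, eOne, eTwo, eBar, so3MP, Matrix.vecHead,
        Matrix.vecTail]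

/-- The frame path `(⁺₋⁻₋)`: `v₁(t) = −e₁`, `v₂(t) = cos(πt)·e₂ − sin(πt)·ē`, running
from `[−e₁, e₂]` to `[−e₁, −e₂]`. -/
def pathB : Path so3MP so3MM where
  toFun t := ⟨frameMatrix (-eOne) (fun i => cos (π * t) * eTwo i - sin (π * t) * eBar i), by
    have h := sin_sq_add_cos_sq (π * (t : ℝ))
    refine ⟨?_, ?_⟩
    · ext i j
      fin_cases i <;> fin_cases j <;>
        (simp [frameMatrix, cross_apply, eOne, eTwo, eBar, Matrix.mul_apply,
          Fin.sum_univ_three, Matrix.one_apply, Matrix.transpose_apply, Matrix.vecHead,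
          Matrix.vecTail] <;> nlinarith [h])
    · simp [frameMatrix, cross_apply, eOne, eTwo, eBar, Matrix.det_fin_three,
        Matrix.vecHead, Matrix.vecTail] <;> nlinarith [h]⟩
  continuous_toFun := by
    apply Continuous.subtype_mk
    apply continuous_matrix
    intro i j
    fin_cases i <;> fin_cases j <;>
      (simp [frameMatrix, cross_apply, eOne, eTwo, eBar, Matrix.vecHead, Matrix.vecTail] <;>
        fun_prop)
  source' := by
    apply Subtype.ext
    ext i j
    fin_cases i <;> fin_cases j <;>
      simp [frameMatrix, cross_apply, eOne, eTwo, eBar, so3MP, Matrix.vecHead,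
        Matrix.vecTail]
  target' := by
    apply Subtype.ext
    ext i j
    fin_cases i <;> fin_cases j <;>
      simp [frameMatrix, cross_apply, eOne, eTwo, eBar, so3MM, Matrix.vecHead,
        Matrix.vecTail]

/-- The frame path `(⁻₋⁻₊)`: `v₁(t) = −cos(πt)·e₁ + sin(πt)·ē`, `v₂(t) = −e₂`, running
from `[−e₁, −e₂]` to `[e₁, −e₂]`. -/
def pathC : Path so3MM so3PM where
  toFun t := ⟨frameMatrix (fun i => -cos (π * t) * eOne i + sin (π * t) * eBar i) (-eTwo), by
    have h := sin_sq_add_cos_sq (π * (t : ℝ))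
    refine ⟨?_, ?_⟩
    · ext i j
      fin_cases i <;> fin_cases j <;>
        (simp [frameMatrix, cross_apply, eOne, eTwo, eBar, Matrix.mul_apply,
          Fin.sum_univ_three, Matrix.one_apply, Matrix.transpose_apply, Matrix.vecHead,
          Matrix.vecTail] <;> nlinarith [h])
    · simp [frameMatrix, cross_apply, eOne, eTwo, eBar, Matrix.det_fin_three,
        Matrix.vecHead, Matrix.vecTail] <;> nlinarith [h]⟩
  continuous_toFun := by
    apply Continuous.subtype_mk
    apply continuous_matrix
    intro i j
    fin_cases i <;> fin_cases j <;>
      (simp [frameMatrix, cross_apply, eOne, eTwo, eBar, Matrix.vecHead, Matrix.vecTail] <;>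
        fun_prop)
  source' := by
    apply Subtype.ext
    ext i j
    fin_cases i <;> fin_cases j <;>
      simp [frameMatrix, cross_apply, eOne, eTwo, eBar, so3MM, Matrix.vecHead,
        Matrix.vecTail]
  target' := by
    apply Subtype.ext
    ext i j
    fin_cases i <;> fin_cases j <;>
      simp [frameMatrix, cross_apply, eOne, eTwo, eBar, so3PM, Matrix.vecHead,
        Matrix.vecTail]

/-- The frame path `(⁻₊⁺₊)`: `v₁(t) = e₁`, `v₂(t) = −cos(πt)·e₂ + sin(πt)·ē`, running
from `[e₁, −e₂]` back to `[e₁, e₂]`. -/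
def pathD : Path so3PM so3One where
  toFun t := ⟨frameMatrix eOne (fun i => -cos (π * t) * eTwo i + sin (π * t) * eBar i), by
    have h := sin_sq_add_cos_sq (π * (t : ℝ))
    refine ⟨?_, ?_⟩
    · ext i j
      fin_cases i <;> fin_cases j <;>
        (simp [frameMatrix, cross_apply, eOne, eTwo, eBar, Matrix.mul_apply,
          Fin.sum_univ_three, Matrix.one_apply, Matrix.transpose_apply, Matrix.vecHead,
          Matrix.vecTail] <;> nlinarith [h])
    · simp [frameMatrix, cross_apply, eOne, eTwo, eBar, Matrix.det_fin_three,
        Matrix.vecHead, Matrix.vecTail] <;> nlinarith [h]⟩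
  continuous_toFun := by
    apply Continuous.subtype_mk
    apply continuous_matrix
    intro i j
    fin_cases i <;> fin_cases j <;>
      (simp [frameMatrix, cross_apply, eOne, eTwo, eBar, Matrix.vecHead, Matrix.vecTail] <;>
        fun_prop)
  source' := by
    apply Subtype.ext
    ext i j
    fin_cases i <;> fin_cases j <;>
      simp [frameMatrix, cross_apply, eOne, eTwo, eBar, so3PM, Matrix.vecHead,
        Matrix.vecTail]
  target' := by
    apply Subtype.ext
    ext i j
    fin_cases i <;> fin_cases j <;>
      simp [frameMatrix, cross_apply, eOne, eTwo, eBar, so3One, Matrix.one_apply,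
        Matrix.vecHead, Matrix.vecTail]

/-! ### Auxiliary: unit quaternions and the covering of SO(3) -/

open Quaternion unitInterval

/-- The unit quaternions. -/
abbrev S3q := {q : Quaternion ℝ // ‖q‖ = 1}

lemma norm_eq_one_of_sq (q : ℍ[ℝ])
    (h : q.re ^ 2 + q.imI ^ 2 + q.imJ ^ 2 + q.imK ^ 2 = 1) : ‖q‖ = 1 := by
  have h2 : ‖q‖ * ‖q‖ = 1 := by
    rw [← Quaternion.normSq_eq_norm_mul_self, Quaternion.normSq_def']
    exact h
  nlinarith [norm_nonneg q]

/-- The rotation matrix associated to a quaternion. -/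
def rotMat (q : ℍ[ℝ]) : Matrix (Fin 3) (Fin 3) ℝ :=
  Matrix.of
    ![![q.re ^ 2 + q.imI ^ 2 - q.imJ ^ 2 - q.imK ^ 2, 2 * (q.imI * q.imJ - q.re * q.imK),
        2 * (q.imI * q.imK + q.re * q.imJ)],
      ![2 * (q.imI * q.imJ + q.re * q.imK), q.re ^ 2 - q.imI ^ 2 + q.imJ ^ 2 - q.imK ^ 2,
        2 * (q.imJ * q.imK - q.re * q.imI)],
      ![2 * (q.imI * q.imK - q.re * q.imJ), 2 * (q.imJ * q.imK + q.re * q.imI),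
        q.re ^ 2 - q.imI ^ 2 - q.imJ ^ 2 + q.imK ^ 2]]

lemma sq_of_norm_one (q : S3q) :
    q.1.re ^ 2 + q.1.imI ^ 2 + q.1.imJ ^ 2 + q.1.imK ^ 2 = 1 := by
  have h2 : Quaternion.normSq q.1 = 1 := by
    rw [Quaternion.normSq_eq_norm_mul_self, q.2]; ring
  rw [Quaternion.normSq_def'] at h2
  exact h2

/-- The double-cover map from unit quaternions to `SO(3)`. -/
def rho (q : S3q) : SO3 := by
  refine ⟨rotMat q.1, ?_, ?_⟩
  · have h1 := sq_of_norm_one q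
    ext i j
    fin_cases i <;> fin_cases j <;>
      · simp [rotMat, Matrix.mul_apply, Fin.sum_univ_three, Matrix.one_apply,
          Matrix.transpose_apply, Matrix.vecHead, Matrix.vecTail]
        first
          | linear_combination
              (q.1.re ^ 2 + q.1.imI ^ 2 + q.1.imJ ^ 2 + q.1.imK ^ 2 + 1) * h1
          | ring
  · have h1 := sq_of_norm_one q
    simp [rotMat, Matrix.det_fin_three, Matrix.vecHead, Matrix.vecTail]
    linear_combination
      ((q.1.re ^ 2 + q.1.imI ^ 2 + q.1.imJ ^ 2 + q.1.imK ^ 2) ^ 2 +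
        (q.1.re ^ 2 + q.1.imI ^ 2 + q.1.imJ ^ 2 + q.1.imK ^ 2) + 1) * h1

lemma continuous_rho : Continuous rho := by
  apply Continuous.subtype_mk
  have ha : Continuous fun q : S3q => q.1.re :=
    Quaternion.continuous_re.comp continuous_subtype_val
  have hb : Continuous fun q : S3q => q.1.imI :=
    Quaternion.continuous_imI.comp continuous_subtype_val
  have hc : Continuous fun q : S3q => q.1.imJ :=
    Quaternion.continuous_imJ.comp continuous_subtype_val
  have hd : Continuous fun q : S3q => q.1.imK :=
    Quaternion.continuous_imK.comp continuous_subtype_val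
  apply continuous_matrix
  intro i j
  fin_cases i <;> fin_cases j <;>
    · simp [rotMat, Matrix.vecHead, Matrix.vecTail]
      fun_prop

/-- Explicit constructor for quaternions. -/
def mkQ (a b c d : ℝ) : ℍ[ℝ] := ⟨a, b, c, d⟩

@[simp] lemma mkQ_re (a b c d : ℝ) : (mkQ a b c d).re = a := rfl
@[simp] lemma mkQ_imI (a b c d : ℝ) : (mkQ a b c d).imI = b := rfl
@[simp] lemma mkQ_imJ (a b c d : ℝ) : (mkQ a b c d).imJ = c := rfl
@[simp] lemma mkQ_imK (a b c d : ℝ) : (mkQ a b c d).imK = d := rfl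

lemma quat_mk_eq (a b c d : ℝ) :
    mkQ a b c d =
      (a : ℍ[ℝ]) + (b : ℍ[ℝ]) * mkQ 0 1 0 0 + (c : ℍ[ℝ]) * mkQ 0 0 1 0 +
        (d : ℍ[ℝ]) * mkQ 0 0 0 1 := by
  ext <;>
    simp [Quaternion.re_mul, Quaternion.imI_mul, Quaternion.imJ_mul, Quaternion.imK_mul]

lemma continuous_quat_mk {α : Type*} [TopologicalSpace α] {f g h k : α → ℝ}
    (hf : Continuous f) (hg : Continuous g) (hh : Continuous h) (hk : Continuous k) :
    Continuous fun x => mkQ (f x) (g x) (h x) (k x) := by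
  have : (fun x => mkQ (f x) (g x) (h x) (k x)) = fun x =>
      ((f x : ℍ[ℝ]) + (g x : ℍ[ℝ]) * mkQ 0 1 0 0 + (h x : ℍ[ℝ]) * mkQ 0 0 1 0 +
        (k x : ℍ[ℝ]) * mkQ 0 0 0 1) := by
    funext x; exact quat_mk_eq _ _ _ _
  rw [this]
  exact (((Quaternion.continuous_coe.comp hf).add
    ((Quaternion.continuous_coe.comp hg).mul continuous_const)).add
    ((Quaternion.continuous_coe.comp hh).mul continuous_const)).add
    ((Quaternion.continuous_coe.comp hk).mul continuous_const)

/-- `1` as a unit quaternion. -/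
def oneQ : S3q := ⟨1, norm_one⟩

/-- `-k` as a unit quaternion. -/
def mKQ : S3q := ⟨mkQ 0 0 0 (-1), by apply norm_eq_one_of_sq; simp⟩

/-- `i` as a unit quaternion. -/
def iQ : S3q := ⟨mkQ 0 1 0 0, by apply norm_eq_one_of_sq; simp⟩

/-- `j` as a unit quaternion. -/
def jQ : S3q := ⟨mkQ 0 0 1 0, by apply norm_eq_one_of_sq; simp⟩

/-- Quaternion lift of `pathA`. -/
def qA : Path oneQ mKQ where
  toFun t := ⟨mkQ (cos (π * t / 2)) 0 0 (-sin (π * t / 2)), by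
    apply norm_eq_one_of_sq
    simp
    all_goals nlinarith [sin_sq_add_cos_sq (π * (t : ℝ) / 2)]⟩
  continuous_toFun := by
    apply Continuous.subtype_mk
    apply continuous_quat_mk <;> fun_prop
  source' := by
    apply Subtype.ext
    ext <;> simp [oneQ, mkQ]
  target' := by
    apply Subtype.ext
    ext <;> simp [mKQ, mkQ]

/-- Quaternion lift of `pathB`. -/
def qB : Path mKQ iQ where
  toFun t := ⟨mkQ 0 (sin (π * t / 2)) 0 (-cos (π * t / 2)), by
    apply norm_eq_one_of_sq
    simp
    all_goals nlinarith [sin_sq_add_cos_sq (π * (t : ℝ) / 2)]⟩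
  continuous_toFun := by
    apply Continuous.subtype_mk
    apply continuous_quat_mk <;> fun_prop
  source' := by
    apply Subtype.ext
    ext <;> simp [mKQ, mkQ]
  target' := by
    apply Subtype.ext
    ext <;> simp [iQ, mkQ]

/-- Quaternion lift of `pathC`. -/
def qC : Path iQ jQ where
  toFun t := ⟨mkQ 0 (cos (π * t / 2)) (sin (π * t / 2)) 0, by
    apply norm_eq_one_of_sq
    simp
    all_goals nlinarith [sin_sq_add_cos_sq (π * (t : ℝ) / 2)]⟩
  continuous_toFun := by
    apply Continuous.subtype_mk
    apply continuous_quat_mk <;> fun_prop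
  source' := by
    apply Subtype.ext
    ext <;> simp [iQ, mkQ]
  target' := by
    apply Subtype.ext
    ext <;> simp [jQ, mkQ]

/-- Quaternion lift of `pathD`. -/
def qD : Path jQ oneQ where
  toFun t := ⟨mkQ (sin (π * t / 2)) 0 (cos (π * t / 2)) 0, by
    apply norm_eq_one_of_sq
    simp
    all_goals nlinarith [sin_sq_add_cos_sq (π * (t : ℝ) / 2)]⟩
  continuous_toFun := by
    apply Continuous.subtype_mk
    apply continuous_quat_mk <;> fun_prop
  source' := by
    apply Subtype.ext
    ext <;> simp [jQ, mkQ]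
  target' := by
    apply Subtype.ext
    ext <;> simp [oneQ, mkQ]

section keys

variable (t : I)

lemma double_angle :
    sin (π * (t : ℝ)) = 2 * sin (π * (t : ℝ) / 2) * cos (π * (t : ℝ) / 2) ∧
      cos (π * (t : ℝ)) = 2 * cos (π * (t : ℝ) / 2) ^ 2 - 1 := by
  constructor
  · have h := sin_two_mul (π * (t : ℝ) / 2)
    rw [show 2 * (π * (t : ℝ) / 2) = π * (t : ℝ) by ring] at h
    exact h
  · have h := cos_two_mul (π * (t : ℝ) / 2)
    rw [show 2 * (π * (t : ℝ) / 2) = π * (t : ℝ) by ring] at h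
    exact h

lemma keyA : pathA t = rho (qA t) := by
  obtain ⟨hs, hc⟩ := double_angle t
  have hp := sin_sq_add_cos_sq (π * (t : ℝ) / 2)
  apply Subtype.ext
  ext i j
  fin_cases i <;> fin_cases j <;>
    · simp [pathA, qA, rho, rotMat, frameMatrix, cross_apply, eOne, eTwo, eBar,
        Matrix.vecHead, Matrix.vecTail]
      all_goals nlinarith [hs, hc, hp]

lemma keyB : pathB t = rho (qB t) := by
  obtain ⟨hs, hc⟩ := double_angle t
  have hp := sin_sq_add_cos_sq (π * (t : ℝ) / 2)
  apply Subtype.ext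
  ext i j
  fin_cases i <;> fin_cases j <;>
    · simp [pathB, qB, rho, rotMat, frameMatrix, cross_apply, eOne, eTwo, eBar,
        Matrix.vecHead, Matrix.vecTail]
      all_goals nlinarith [hs, hc, hp]

lemma keyC : pathC t = rho (qC t) := by
  obtain ⟨hs, hc⟩ := double_angle t
  have hp := sin_sq_add_cos_sq (π * (t : ℝ) / 2)
  apply Subtype.ext
  ext i j
  fin_cases i <;> fin_cases j <;>
    · simp [pathC, qC, rho, rotMat, frameMatrix, cross_apply, eOne, eTwo, eBar,
        Matrix.vecHead, Matrix.vecTail]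
      all_goals nlinarith [hs, hc, hp]

lemma keyD : pathD t = rho (qD t) := by
  obtain ⟨hs, hc⟩ := double_angle t
  have hp := sin_sq_add_cos_sq (π * (t : ℝ) / 2)
  apply Subtype.ext
  ext i j
  fin_cases i <;> fin_cases j <;>
    · simp [pathD, qD, rho, rotMat, frameMatrix, cross_apply, eOne, eTwo, eBar,
        Matrix.vecHead, Matrix.vecTail]
      all_goals nlinarith [hs, hc, hp]

end keys

/-- Loops of unit quaternions with nonnegative real part contract to the constant loop. -/
lemma contract (p : Path oneQ oneQ) (hre : ∀ t, 0 ≤ (p t).1.re) :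
    p.Homotopic (Path.refl oneQ) := by
  set v : I × I → ℍ[ℝ] :=
    fun st => (1 - (st.1 : ℝ)) • ((p st.2).1) + (st.1 : ℝ) • 1 with hvdef
  have hnormone : ∀ t : I, ‖(p t).1‖ = 1 := fun t => (p t).2
  have hv0 : ∀ st : I × I, v st ≠ 0 := by
    rintro ⟨s, t⟩ h
    have h1 : (1 - (s : ℝ)) * ((p t).1.re) + (s : ℝ) = 0 := by
      have := congrArg QuaternionAlgebra.re h
      simpa [v, Quaternion.re_smul, smul_eq_mul] using this
    have h2 : 0 ≤ (1 - (s : ℝ)) * ((p t).1.re) :=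
      mul_nonneg (by linarith [s.2.2]) (hre t)
    have hs0 : (s : ℝ) = 0 := by linarith [s.2.1]
    have h3 : ((p t).1 : ℍ[ℝ]) = 0 := by
      have h4 := h
      simp only [v, hs0] at h4
      simpa using h4
    have h5 := hnormone t
    rw [h3, norm_zero] at h5
    norm_num at h5
  have hcv : Continuous v := by
    have h1 : Continuous fun st : I × I => (1 - (st.1 : ℝ)) :=
      continuous_const.sub (continuous_subtype_val.comp continuous_fst)
    have h2 : Continuous fun st : I × I => ((p st.2).1 : ℍ[ℝ]) :=
      continuous_subtype_val.comp (p.continuous.comp continuous_snd)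
    exact (h1.smul h2).add
      ((continuous_subtype_val.comp continuous_fst).smul continuous_const)
  have hnorm : ∀ st, ‖v st‖ ≠ 0 := fun st => norm_ne_zero_iff.2 (hv0 st)
  refine ⟨⟨⟨⟨fun st => ⟨‖v st‖⁻¹ • v st, ?_⟩, ?_⟩, ?_, ?_⟩, ?_⟩⟩
  · rw [norm_smul, norm_inv, norm_norm, inv_mul_cancel₀ (hnorm _)]
  · exact Continuous.subtype_mk ((hcv.norm.inv₀ hnorm).smul hcv) _
  · intro t
    apply Subtype.ext
    have : v (0, t) = (p t).1 := by simp [v]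
    simp [this, hnormone t]
  · intro t
    apply Subtype.ext
    have : v (1, t) = 1 := by simp [v]
    simp [this, oneQ]
  · intro s x hx
    have hx01 : p x = oneQ := by
      rcases hx with rfl | hx
      · exact p.source
      · rw [Set.mem_singleton_iff] at hx; subst hx; exact p.target
    have hvx : v (s, x) = 1 := by
      simp only [v]
      rw [hx01]
      show (1 - (s : ℝ)) • (1 : ℍ[ℝ]) + (s : ℝ) • 1 = 1
      rw [← add_smul]
      simp
    apply Subtype.ext
    simp only [ContinuousMap.coe_mk]
    rw [hvx]
    rw [show p.toContinuousMap x = p x from rfl, hx01]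
    simp [oneQ]

lemma trans_re_nonneg {x y z : S3q} (p : Path x y) (q : Path y z)
    (hp : ∀ t, 0 ≤ (p t).1.re) (hq : ∀ t, 0 ≤ (q t).1.re) :
    ∀ t, 0 ≤ ((p.trans q) t).1.re := by
  intro t
  rw [Path.trans_apply]
  split_ifs
  · exact hp _
  · exact hq _

lemma transfer {X Y : Type*} [TopologicalSpace X] [TopologicalSpace Y] {f : X → Y}
    (hf : Continuous f) {x : X} {y : Y} (hy : y = f x) (p : Path x x)
    (hp : p.Homotopic (Path.refl x)) (q : Path y y) (hq : ∀ t, q t = f (p t)) :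
    q.Homotopic (Path.refl y) := by
  subst hy
  have hq' : q = p.map hf := Path.ext (funext fun t => by rw [hq t]; rfl)
  have h2 : (Path.refl x).map hf = Path.refl (f x) := Path.ext (funext fun _ => rfl)
  rw [hq']
  exact h2 ▸ hp.map ⟨f, hf⟩

set_option maxHeartbeats 1600000

/-- The loop `(⁺₊⁺₋)·(⁺₋⁻₋)·(⁻₋⁻₊)·(⁻₊⁺₊)` of standard frame paths is null-homotopic in
`SO(3)`: it is path-homotopic, rel endpoints, to the constant loop at the identity. -/
theorem loop_four_edges_nullhomotopic :
    (((pathA.trans pathB).trans pathC).trans pathD).Homotopic (Path.refl so3One) := by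
  have hreA : ∀ t : I, 0 ≤ (qA t).1.re := by
    intro t
    have := t.2.1; have := t.2.2
    show (0 : ℝ) ≤ cos (π * (t : ℝ) / 2)
    apply cos_nonneg_of_mem_Icc
    constructor <;> nlinarith [pi_pos]
  have hreB : ∀ t : I, 0 ≤ (qB t).1.re := fun t => le_refl (0 : ℝ)
  have hreC : ∀ t : I, 0 ≤ (qC t).1.re := fun t => le_refl (0 : ℝ)
  have hreD : ∀ t : I, 0 ≤ (qD t).1.re := by
    intro t
    have := t.2.1; have := t.2.2
    show (0 : ℝ) ≤ sin (π * (t : ℝ) / 2)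
    apply sin_nonneg_of_nonneg_of_le_pi <;> nlinarith [pi_pos]
  have hreloop : ∀ t : I, 0 ≤ ((((qA.trans qB).trans qC).trans qD) t).1.re :=
    trans_re_nonneg _ _ (trans_re_nonneg _ _ (trans_re_nonneg _ _ hreA hreB) hreC) hreD
  have hcontract := contract (((qA.trans qB).trans qC).trans qD) hreloop
  have hone : so3One = rho oneQ := by
    apply Subtype.ext
    ext i j
    fin_cases i <;> fin_cases j <;>
      simp [so3One, rho, rotMat, oneQ, Matrix.one_apply, Matrix.vecHead, Matrix.vecTail]
  refine transfer continuous_rho hone _ hcontract _ ?_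
  intro t
  simp only [Path.trans_apply]
  split_ifs
  exacts [keyA _, keyB _, keyC _, keyD _]

end
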